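/- Let $k$ be a field of characteristic $p$, $n\geq m$ and $2\leq m\leq p$, and $V_r$ the homogeneous polynomials of degree $r-1$ in $X,Y$ over $k$. The kernel of the map $\lambda\colon V_n\otimes V_m\to V_{n+1}\otimes V_{m-1}$, $f\otimes g\mapsto Xf\otimes \partial g/\partial X + Yf\otimes \partial g/\partial Y$, is isomorphic to $V_{n-m+1}$; specifically, the injective linear map $\eta\colon V_{n-m+1}\to V_n\otimes V_m$ given by $\eta(f)=\sum_{i=0}^{m-1}(-1)^{m-1-i}\binom{m-1}{i} fX^iY^{m-1-i}\otimes X^{m-1-i}Y^i$ has image equal to $\ker\lambda$. -/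

import Mathlib

set_option synthInstance.maxHeartbeats 1000000
set_option maxHeartbeats 1600000


open MvPolynomial TensorProduct

/-- `Vr k r` is the space of homogeneous polynomials of degree `r - 1`
in the two variables `X = X 0` and `Y = X 1` over `k`. -/
def Vr (k : Type) [CommRing k] (r : ℕ) : Submodule k (MvPolynomial (Fin 2) k) :=
  homogeneousSubmodule (Fin 2) k (r - 1)

theorem mul_mem_Vr (k : Type) [CommRing k] {a b c : ℕ} (ha : 1 ≤ a) (hb : 1 ≤ b)
    (hc : c = a + b - 1) {f g : MvPolynomial (Fin 2) k}
    (hf : f ∈ Vr k a) (hg : g ∈ Vr k b) : f * g ∈ Vr k c := by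
  rw [Vr, mem_homogeneousSubmodule] at hf hg ⊢
  have h := hf.mul hg
  have he : (a - 1) + (b - 1) = c - 1 := by omega
  rwa [he] at h

theorem X_mem_Vr (k : Type) [CommRing k] (v : Fin 2) : X v ∈ Vr k 2 := by
  have h : (2 : ℕ) - 1 = 1 := rfl
  rw [Vr, h, mem_homogeneousSubmodule]
  exact isHomogeneous_X k v

theorem pderiv_isHomogeneous {k : Type} [CommRing k] {d : ℕ} {φ : MvPolynomial (Fin 2) k}
    (hφ : φ.IsHomogeneous d) (v : Fin 2) : (pderiv v φ).IsHomogeneous (d - 1) := by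
  classical
  have hrep : pderiv v φ = ∑ s ∈ φ.support, pderiv v (monomial s (coeff s φ)) := by
    conv_lhs => rw [as_sum φ]
    rw [map_sum]
  rw [← mem_homogeneousSubmodule, hrep]
  apply Submodule.sum_mem
  intro s hs
  rw [pderiv_monomial]
  by_cases h0 : s v = 0
  · simp [h0]
  · rw [mem_homogeneousSubmodule]
    apply isHomogeneous_monomial
    have hsd : s.degree = d := by
      rw [Finsupp.degree_eq_weight_one]
      exact hφ (mem_support_iff.mp hs)
    have hle : Finsupp.single v 1 ≤ s := Finsupp.single_le_iff.mpr (by omega)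
    have key : (s - Finsupp.single v 1) + Finsupp.single v 1 = s := tsub_add_cancel_of_le hle
    have hadd : ((s - Finsupp.single v 1) + Finsupp.single v 1).degree
        = (s - Finsupp.single v 1).degree + (Finsupp.single v 1).degree := by
      simp [Finsupp.degree_eq_weight_one, map_add]
    have hsingle : (Finsupp.single v 1).degree = 1 := by
      exact Finsupp.degree_single v 1
    rw [key] at hadd
    omega

theorem pderiv_mem_Vr (k : Type) [CommRing k] {r : ℕ} {f : MvPolynomial (Fin 2) k}
    (hf : f ∈ Vr k r) (v : Fin 2) : pderiv v f ∈ Vr k (r - 1) := by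
  rw [Vr, mem_homogeneousSubmodule] at hf ⊢
  exact pderiv_isHomogeneous hf v

theorem monomial_mem_Vr (k : Type) [CommRing k] (a b : ℕ) {r : ℕ} (hr : r = a + b + 1) :
    X 0 ^ a * X 1 ^ b ∈ Vr (k := k) r := by
  rw [Vr, mem_homogeneousSubmodule]
  have h := ((isHomogeneous_X k (0 : Fin 2)).pow a).mul ((isHomogeneous_X k (1 : Fin 2)).pow b)
  have he : 1 * a + 1 * b = r - 1 := by omega
  rwa [he] at h



namespace Aux
variable {k : Type} [Field k]

abbrev P2 (k : Type) [CommRing k] := MvPolynomial (Fin 2) k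

/-- exponent finsupp for X^a Y^b -/
noncomputable def ex (a b : ℕ) : Fin 2 →₀ ℕ := Finsupp.single 0 a + Finsupp.single 1 b

@[simp] lemma ex_apply_zero (a b : ℕ) : ex a b 0 = a := by
  simp [ex, Finsupp.single_apply]

@[simp] lemma ex_apply_one (a b : ℕ) : ex a b 1 = b := by
  simp [ex, Finsupp.single_apply]

lemma eq_ex_self (s : Fin 2 →₀ ℕ) : s = ex (s 0) (s 1) := by
  ext x; fin_cases x <;> simp

lemma ex_inj {a b a' b' : ℕ} (h : ex a b = ex a' b') : a = a' ∧ b = b' := by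
  constructor
  · have := DFunLike.congr_fun h 0; simpa using this
  · have := DFunLike.congr_fun h 1; simpa using this

lemma ex_add (a b a' b' : ℕ) : ex a b + ex a' b' = ex (a + a') (b + b') := by
  ext x; fin_cases x <;> simp

lemma ex_sub (a b a' b' : ℕ) : ex a b - ex a' b' = ex (a - a') (b - b') := by
  ext x; fin_cases x <;> simp [Finsupp.tsub_apply]

lemma ex_le_iff {a b a' b' : ℕ} : ex a b ≤ ex a' b' ↔ a ≤ a' ∧ b ≤ b' := by
  constructor
  · intro h
    exact ⟨by simpa using h 0, by simpa using h 1⟩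
  · intro ⟨h1, h2⟩ x
    fin_cases x <;> simpa

lemma single_zero_eq_ex (a : ℕ) : Finsupp.single (0 : Fin 2) a = ex a 0 := by
  simp [ex]

lemma single_one_eq_ex (b : ℕ) : Finsupp.single (1 : Fin 2) b = ex 0 b := by
  simp [ex]

lemma mon_eq (a b : ℕ) : (X 0 : P2 k) ^ a * X 1 ^ b = monomial (ex a b) 1 := by
  rw [X_pow_eq_monomial, X_pow_eq_monomial, monomial_mul, one_mul, ex]

lemma coeff_mon (a b : ℕ) (s : Fin 2 →₀ ℕ) :
    coeff s ((X 0 : P2 k) ^ a * X 1 ^ b) = if ex a b = s then 1 else 0 := by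
  rw [mon_eq, coeff_monomial]

lemma degree_fin2 (s : Fin 2 →₀ ℕ) : s.degree = s 0 + s 1 := by
  classical
  rw [Finsupp.degree_apply]
  rw [show s.support = (Finset.univ.filter fun i => s i ≠ 0) from ?_]
  · rw [Finset.sum_filter_ne_zero, Fin.sum_univ_two]
  · ext x; simp [Finsupp.mem_support_iff]

/-- coefficient vanishing for homogeneous polys -/
lemma coeff_hom_zero {d : ℕ} {g : P2 k} (hg : g ∈ homogeneousSubmodule (Fin 2) k d)
    {s : Fin 2 →₀ ℕ} (hs : s 0 + s 1 ≠ d) : coeff s g = 0 := by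
  by_contra h
  rw [mem_homogeneousSubmodule] at hg
  have := hg h
  have this : s.degree = d := by rw [Finsupp.degree_eq_weight_one]; exact this
  rw [degree_fin2] at this
  exact hs this

lemma hom_ext {d : ℕ} {g : P2 k} (hg : g ∈ homogeneousSubmodule (Fin 2) k d)
    (h : ∀ i, i ≤ d → coeff (ex i (d - i)) g = 0) : g = 0 := by
  apply MvPolynomial.ext
  intro s
  rw [coeff_zero]
  by_cases hd : s 0 + s 1 = d
  · have h1 : s 1 = d - s 0 := by omega
    rw [eq_ex_self s, h1]
    exact h _ (by omega)
  · exact coeff_hom_zero hg hd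


lemma coeff_pderiv (v : Fin 2) (φ : P2 k) (s : Fin 2 →₀ ℕ) :
    coeff s (pderiv v φ) = ((s v + 1 : ℕ) : k) * coeff (s + Finsupp.single v 1) φ := by
  induction φ using MvPolynomial.induction_on' with
  | monomial u a =>
    rw [pderiv_monomial, coeff_monomial, coeff_monomial]
    by_cases h : u = s + Finsupp.single v 1
    · have huv : u v = s v + 1 := by
        rw [h]; simp
      have : u - Finsupp.single v 1 = s := by
        rw [h]; ext x; by_cases hx : x = v <;> simp [hx, Finsupp.tsub_apply, Finsupp.single_apply]
      rw [if_pos this, if_pos h, huv]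
      push_cast; ring
    · rw [if_neg h]
      by_cases h2 : u - Finsupp.single v 1 = s
      · rw [if_pos h2]
        have huv : u v = 0 := by
          by_contra h3
          apply h
          ext x
          have hx2 := DFunLike.congr_fun h2 x
          rw [Finsupp.tsub_apply] at hx2
          simp only [Finsupp.add_apply, Finsupp.single_apply] at *
          by_cases hx : v = x
          · subst hx; simp at hx2 ⊢; omega
          · simp [hx] at hx2 ⊢; omega
        simp [huv]
      · simp [if_neg h2]
  | add p q hp hq => simp [hp, hq, mul_add]

/-- the coefficient bilinear functional on the ambient tensor square -/
noncomputable def cfb (s s' : Fin 2 →₀ ℕ) : (P2 k ⊗[k] P2 k) →ₗ[k] k :=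
  TensorProduct.lift (LinearMap.mk₂ k (fun a b => coeff s a * coeff s' b)
    (fun a a' b => by simp [coeff_add, add_mul])
    (fun c a b => by simp [coeff_smul, smul_eq_mul]; ring)
    (fun a b b' => by simp [coeff_add, mul_add])
    (fun c a b => by simp [coeff_smul, smul_eq_mul]; ring))

@[simp] lemma cfb_tmul (s s' : Fin 2 →₀ ℕ) (a b : P2 k) :
    cfb s s' (a ⊗ₜ b) = coeff s a * coeff s' b := rfl

lemma cfb_jointly_inj (w : P2 k ⊗[k] P2 k) (h : ∀ s s', cfb s s' w = 0) : w = 0 := by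
  classical
  set B := (MvPolynomial.basisMonomials (Fin 2) k).tensorProduct
    (MvPolynomial.basisMonomials (Fin 2) k) with hB
  have key : ∀ (u : P2 k ⊗[k] P2 k) (s s' : Fin 2 →₀ ℕ), B.repr u (s, s') = cfb s s' u := by
    intro u
    induction u with
    | zero => simp
    | tmul a b =>
      intro s s'
      rw [hB, Module.Basis.tensorProduct_repr_tmul_apply, cfb_tmul, smul_eq_mul]
      have ha : ((MvPolynomial.basisMonomials (Fin 2) k).repr a) s = coeff s a := rfl
      have hb : ((MvPolynomial.basisMonomials (Fin 2) k).repr b) s' = coeff s' b := rfl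
      rw [ha, hb, mul_comm]
    | add x y hx hy => intro s s'; simp [hx, hy]
  have : B.repr w = 0 := by
    ext ⟨s, s'⟩
    rw [key w s s', h s s']; rfl
  simpa using (B.repr.map_eq_zero_iff).mp this

lemma iota_inj (P Q : Submodule k (P2 k)) :
    Function.Injective (TensorProduct.map P.subtype Q.subtype) := by
  obtain ⟨P', hP⟩ := Submodule.exists_isCompl P
  obtain ⟨Q', hQ⟩ := Submodule.exists_isCompl Q
  set πP := P.projectionOnto P' hP
  set πQ := Q.projectionOnto Q' hQ
  have hlP : πP.comp P.subtype = LinearMap.id := by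
    ext x; simp [πP]
  have hlQ : πQ.comp Q.subtype = LinearMap.id := by
    ext x; simp [πQ]
  have : (TensorProduct.map πP πQ).comp (TensorProduct.map P.subtype Q.subtype)
      = LinearMap.id := by
    rw [← TensorProduct.map_comp, hlP, hlQ]
    exact TensorProduct.map_id
  intro x y hxy
  have h2 : (TensorProduct.map πP πQ) ((TensorProduct.map P.subtype Q.subtype) x)
      = (TensorProduct.map πP πQ) ((TensorProduct.map P.subtype Q.subtype) y) :=
    congrArg _ hxy
  rwa [← LinearMap.comp_apply, ← LinearMap.comp_apply, this, LinearMap.id_apply,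
    LinearMap.id_apply] at h2
  
/-- coefficient functional on tensor of submodules -/
noncomputable def Phi (P Q : Submodule k (P2 k)) (s s' : Fin 2 →₀ ℕ) :
    (P ⊗[k] Q) →ₗ[k] k :=
  (cfb s s').comp (TensorProduct.map P.subtype Q.subtype)

@[simp] lemma Phi_tmul (P Q : Submodule k (P2 k)) (s s' : Fin 2 →₀ ℕ)
    (a : P) (b : Q) : Phi P Q s s' (a ⊗ₜ b) = coeff s a.1 * coeff s' b.1 := by
  simp [Phi]

lemma Phi_vanish {d₁ d₂ : ℕ}
    (u : (homogeneousSubmodule (Fin 2) k d₁) ⊗[k] (homogeneousSubmodule (Fin 2) k d₂))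
    (s s' : Fin 2 →₀ ℕ) (h : s 0 + s 1 ≠ d₁ ∨ s' 0 + s' 1 ≠ d₂) :
    Phi _ _ s s' u = 0 := by
  induction u with
  | zero => simp
  | tmul a b =>
    rw [Phi_tmul]
    rcases h with h | h
    · rw [coeff_hom_zero a.2 h, zero_mul]
    · rw [coeff_hom_zero b.2 h, mul_zero]
  | add x y hx hy => rw [map_add, hx, hy, add_zero]

lemma tensor_ext {d₁ d₂ : ℕ}
    (u : (homogeneousSubmodule (Fin 2) k d₁) ⊗[k] (homogeneousSubmodule (Fin 2) k d₂))
    (h : ∀ i j : ℕ, Phi _ _ (ex i (d₁ - i)) (ex j (d₂ - j)) u = 0) : u = 0 := by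
  apply iota_inj
  rw [map_zero]
  apply cfb_jointly_inj
  intro s s'
  have : cfb s s' (TensorProduct.map _ _ u) = Phi _ _ s s' u := rfl
  rw [this]
  by_cases h1 : s 0 + s 1 = d₁
  · by_cases h2 : s' 0 + s' 1 = d₂
    · have e1 : s 1 = d₁ - s 0 := by omega
      have e2 : s' 1 = d₂ - s' 0 := by omega
      have hs : s = ex (s 0) (d₁ - s 0) := (eq_ex_self s).trans (by rw [e1])
      have hs' : s' = ex (s' 0) (d₂ - s' 0) := (eq_ex_self s').trans (by rw [e2])
      rw [hs, hs']
      exact h _ _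
    · exact Phi_vanish u s s' (Or.inr h2)
  · exact Phi_vanish u s s' (Or.inl h1)

end Aux

namespace Aux
variable {k : Type} [Field k]

lemma X_eq_monomial (v : Fin 2) : (X v : P2 k) = monomial (Finsupp.single v 1) 1 := rfl

lemma coeff_X0_mul {d : ℕ} {f : P2 k} (hf : f ∈ homogeneousSubmodule (Fin 2) k d)
    (a b : ℕ) (hab : a + b = d + 1) :
    coeff (ex a b) ((X 0 : P2 k) * f) = coeff (ex (a - 1) b) f := by
  rw [mul_comm, X_eq_monomial, coeff_mul_monomial', single_zero_eq_ex]
  by_cases ha : 1 ≤ a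
  · rw [if_pos (ex_le_iff.mpr ⟨ha, Nat.zero_le b⟩), ex_sub, mul_one, Nat.sub_zero]
  · rw [if_neg (fun hc => ha (ex_le_iff.mp hc).1)]
    have : a = 0 := by omega
    subst this
    rw [coeff_hom_zero hf (by simp; omega)]

lemma coeff_X1_mul {d : ℕ} {f : P2 k} (hf : f ∈ homogeneousSubmodule (Fin 2) k d)
    (a b : ℕ) (hab : a + b = d + 1) :
    coeff (ex a b) ((X 1 : P2 k) * f) = coeff (ex a (b - 1)) f := by
  rw [mul_comm, X_eq_monomial, coeff_mul_monomial', single_one_eq_ex]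
  by_cases hb : 1 ≤ b
  · rw [if_pos (ex_le_iff.mpr ⟨Nat.zero_le a, hb⟩), ex_sub, mul_one, Nat.sub_zero]
  · rw [if_neg (fun hc => hb (ex_le_iff.mp hc).2)]
    have : b = 0 := by omega
    subst this
    rw [coeff_hom_zero hf (by simp; omega)]

lemma coeff_pderiv0 {g : P2 k} (a b : ℕ) :
    coeff (ex a b) (pderiv 0 g) = ((a + 1 : ℕ) : k) * coeff (ex (a + 1) b) g := by
  rw [coeff_pderiv, ex_apply_zero, single_zero_eq_ex, ex_add]
  norm_num

lemma coeff_pderiv1 {g : P2 k} (a b : ℕ) :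
    coeff (ex a b) (pderiv 1 g) = ((b + 1 : ℕ) : k) * coeff (ex a (b + 1)) g := by
  rw [coeff_pderiv, ex_apply_one, single_one_eq_ex, ex_add]
  norm_num

end Aux


namespace Aux
variable {k : Type} [Field k]

lemma PC2 (n m : ℕ) (hm2 : 2 ≤ m) (hmn : m ≤ n)
    (lam : TensorProduct k (Vr k n) (Vr k m) →ₗ[k]
      TensorProduct k (Vr k (n + 1)) (Vr k (m - 1)))
    (hlam : ∀ (f : Vr k n) (g : Vr k m),
      lam (f ⊗ₜ g) =
        (⟨X 0 * f.1, mul_mem_Vr k (by norm_num) (by omega) (by omega)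
            (X_mem_Vr k 0) f.2⟩ : Vr k (n + 1)) ⊗ₜ
          (⟨pderiv 0 g.1, pderiv_mem_Vr k g.2 0⟩ : Vr k (m - 1))
        + (⟨X 1 * f.1, mul_mem_Vr k (by norm_num) (by omega) (by omega)
            (X_mem_Vr k 1) f.2⟩ : Vr k (n + 1)) ⊗ₜ
          (⟨pderiv 1 g.1, pderiv_mem_Vr k g.2 1⟩ : Vr k (m - 1)))
    (t : TensorProduct k (Vr k n) (Vr k m)) (i' j' : ℕ) (hi : i' ≤ n) :
    Phi (Vr k (n+1)) (Vr k (m-1)) (ex i' (n - i')) (ex j' (m - 2 - j')) (lam t)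
      = ((j' + 1 : ℕ) : k) * Phi (Vr k n) (Vr k m) (ex (i' - 1) (n - i')) (ex (j' + 1) (m - 2 - j')) t
      + ((m - 2 - j' + 1 : ℕ) : k) * Phi (Vr k n) (Vr k m) (ex i' (n - i' - 1)) (ex j' (m - 2 - j' + 1)) t := by
  induction t with
  | zero => simp
  | add x y hx hy =>
    simp only [map_add, hx, hy]; ring
  | tmul f g =>
    rw [hlam f g, map_add]
    simp only [Phi_tmul]
    rw [coeff_X0_mul f.2 i' (n - i') (by omega), coeff_X1_mul f.2 i' (n - i') (by omega),
        coeff_pderiv0, coeff_pderiv1]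
    ring

lemma PC1 (n m : ℕ) (hm2 : 2 ≤ m) (hmn : m ≤ n)
    (eta : Vr k (n - m + 1) →ₗ[k] TensorProduct k (Vr k n) (Vr k m))
    (heta : ∀ f : Vr k (n - m + 1),
      eta f = ∑ i ∈ (Finset.range m).attach,
        ((-1 : k) ^ (m - 1 - i.1) * ((m - 1).choose i.1 : k)) •
          ((⟨f.1 * (X 0 ^ i.1 * X 1 ^ (m - 1 - i.1)),
              mul_mem_Vr k (by omega) (by omega) (by omega) f.2
                (monomial_mem_Vr k (r := m) _ _
                  (by have := Finset.mem_range.mp i.2; omega))⟩ : Vr k n) ⊗ₜ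
            (⟨X 0 ^ (m - 1 - i.1) * X 1 ^ i.1,
              monomial_mem_Vr k _ _
                (by have := Finset.mem_range.mp i.2; omega)⟩ : Vr k m)))
    (f : Vr k (n - m + 1)) (a b a' b' : ℕ) :
    Phi (Vr k n) (Vr k m) (ex a b) (ex a' b') (eta f)
      = if b' ≤ m - 1 ∧ a' = m - 1 - b' ∧ b' ≤ a ∧ a' ≤ b then
          ((-1 : k) ^ a' * ((m - 1).choose b' : k)) * coeff (ex (a - b') (b - a')) f.1
        else 0 := by
  rw [heta, map_sum]
  simp only [map_smul, Phi_tmul, smul_eq_mul, coeff_mon]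
  rw [Finset.sum_attach (Finset.range m) (fun i => ((-1 : k) ^ (m - 1 - i) * ((m - 1).choose i : k)) *
      (coeff (ex a b) (f.1 * ((X 0 : P2 k) ^ i * X 1 ^ (m - 1 - i))) *
        (if ex (m - 1 - i) i = ex a' b' then (1:k) else 0)))]
  by_cases hc : b' ≤ m - 1 ∧ a' = m - 1 - b'
  · obtain ⟨hb', ha'⟩ := hc
    rw [Finset.sum_eq_single b' ?h0 ?h1]
    case h0 =>
      intro j hj hne
      rw [if_neg (fun hcon => hne (ex_inj hcon).2), mul_zero, mul_zero]
    case h1 =>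
      intro hb
      exact absurd (Finset.mem_range.mpr (Nat.lt_of_le_of_lt hb' (by omega))) hb
    rw [if_pos (by rw [ha']), mul_one, mon_eq, coeff_mul_monomial']
    by_cases hle : b' ≤ a ∧ m - 1 - b' ≤ b
    · rw [if_pos (ex_le_iff.mpr hle), ex_sub, mul_one,
        if_pos ⟨hb', ha', hle.1, by omega⟩, ha']
    · rw [if_neg (fun hcon => hle (ex_le_iff.mp hcon)),
        if_neg (fun hcon => hle ⟨hcon.2.2.1, by omega⟩), mul_zero]
  · rw [Finset.sum_eq_zero, if_neg (fun hcon => hc ⟨hcon.1, hcon.2.1⟩)]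
    intro j hj
    rw [if_neg ?hne, mul_zero, mul_zero]
    case hne =>
      intro hcon
      obtain ⟨h1, h2⟩ := ex_inj hcon
      have hjm := Finset.mem_range.mp hj
      exact hc ⟨by omega, by rw [← h2, ← h1]⟩

end Aux

open Aux in
/-- The kernel of `λ : V_n ⊗ V_m → V_{n+1} ⊗ V_{m-1}`,
`λ(f ⊗ g) = Xf ⊗ ∂g/∂X + Yf ⊗ ∂g/∂Y`, is isomorphic to `V_{n-m+1}`: specifically, the
linear map `η(f) = ∑_{i=0}^{m-1} (-1)^{m-1-i} C(m-1,i) • (f X^i Y^{m-1-i} ⊗ X^{m-1-i} Y^i)`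
is injective with image equal to `ker λ`. -/
theorem lambda_kernel (p : ℕ) (hp : p.Prime) (k : Type) [Field k] [CharP k p]
    (n m : ℕ) (hm2 : 2 ≤ m) (hmp : m ≤ p) (hmn : m ≤ n)
    (lam : TensorProduct k (Vr k n) (Vr k m) →ₗ[k]
      TensorProduct k (Vr k (n + 1)) (Vr k (m - 1)))
    (hlam : ∀ (f : Vr k n) (g : Vr k m),
      lam (f ⊗ₜ g) =
        (⟨X 0 * f.1, mul_mem_Vr k (by norm_num) (by omega) (by omega)
            (X_mem_Vr k 0) f.2⟩ : Vr k (n + 1)) ⊗ₜ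
          (⟨pderiv 0 g.1, pderiv_mem_Vr k g.2 0⟩ : Vr k (m - 1))
        + (⟨X 1 * f.1, mul_mem_Vr k (by norm_num) (by omega) (by omega)
            (X_mem_Vr k 1) f.2⟩ : Vr k (n + 1)) ⊗ₜ
          (⟨pderiv 1 g.1, pderiv_mem_Vr k g.2 1⟩ : Vr k (m - 1)))
    (eta : Vr k (n - m + 1) →ₗ[k] TensorProduct k (Vr k n) (Vr k m))
    (heta : ∀ f : Vr k (n - m + 1),
      eta f = ∑ i ∈ (Finset.range m).attach,
        ((-1 : k) ^ (m - 1 - i.1) * ((m - 1).choose i.1 : k)) •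
          ((⟨f.1 * (X 0 ^ i.1 * X 1 ^ (m - 1 - i.1)),
              mul_mem_Vr k (by omega) (by omega) (by omega) f.2
                (monomial_mem_Vr k (r := m) _ _
                  (by have := Finset.mem_range.mp i.2; omega))⟩ : Vr k n) ⊗ₜ
            (⟨X 0 ^ (m - 1 - i.1) * X 1 ^ i.1,
              monomial_mem_Vr k _ _
                (by have := Finset.mem_range.mp i.2; omega)⟩ : Vr k m))) :
    Function.Injective eta ∧ LinearMap.range eta = LinearMap.ker lam ∧
      Nonempty ((LinearMap.ker lam) ≃ₗ[k] Vr k (n - m + 1)) := by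
  classical
  have hn2 : 2 ≤ n := hm2.trans hmn
  have cast_ne : ∀ x : ℕ, 1 ≤ x → x ≤ m - 1 → ((x : k) ≠ 0) := by
    intro x h1 h2
    rw [Ne, CharP.cast_eq_zero_iff k p]
    intro hdvd
    have := Nat.le_of_dvd (by omega) hdvd
    omega
  -- Part A: injectivity
  have hinj : Function.Injective eta := by
    have h0 : ∀ f : Vr k (n - m + 1), eta f = 0 → f = 0 := by
      intro f hf
      have hval : f.1 = 0 := by
        apply hom_ext f.2
        intro i hi
        have h1 := PC1 n m hm2 hmn eta heta f i (n - 1 - i) (m - 1) 0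
        rw [hf, map_zero] at h1
        rw [if_pos ⟨Nat.zero_le _, by omega, Nat.zero_le _, by omega⟩] at h1
        simp only [Nat.choose_zero_right, Nat.cast_one, mul_one, Nat.sub_zero] at h1
        have h2 : coeff (ex i (n - 1 - i - (m - 1))) f.1 = 0 := by
          rcases mul_eq_zero.mp h1.symm with h' | h'
          · exact absurd h' (pow_ne_zero _ (neg_ne_zero.mpr one_ne_zero))
          · exact h'
        rw [show n - m + 1 - 1 - i = n - 1 - i - (m - 1) from by omega]
        exact h2
      exact Subtype.ext hval
    intro f g hfg
    have := h0 (f - g) (by rw [map_sub, hfg, sub_self])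
    exact sub_eq_zero.mp this
  -- Part B: lam ∘ eta = 0
  have hlameta : ∀ f : Vr k (n - m + 1), lam (eta f) = 0 := by
    intro f
    have hcoeff : ∀ a b : ℕ, a + b ≠ n - m → coeff (ex a b) f.1 = 0 := by
      intro a b hab
      exact coeff_hom_zero f.2 (by simp only [ex_apply_zero, ex_apply_one]; omega)
    apply tensor_ext
    intro i' j'
    by_cases hi : i' ≤ n
    case neg =>
      exact Phi_vanish _ _ _ (Or.inl (by simp only [ex_apply_zero, ex_apply_one]; omega))
    rw [show (n + 1 - 1 : ℕ) - i' = n - i' from by omega,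
        show (m - 1 - 1 : ℕ) - j' = m - 2 - j' from by omega]
    show Phi (Vr k (n + 1)) (Vr k (m - 1)) (ex i' (n - i')) (ex j' (m - 2 - j')) (lam (eta f)) = 0
    rw [PC2 n m hm2 hmn lam hlam (eta f) i' j' hi]
    rw [PC1 n m hm2 hmn eta heta f (i' - 1) (n - i') (j' + 1) (m - 2 - j'),
        PC1 n m hm2 hmn eta heta f i' (n - i' - 1) j' (m - 2 - j' + 1)]
    by_cases hC1 : m - 2 - j' ≤ m - 1 ∧ j' + 1 = m - 1 - (m - 2 - j')
        ∧ m - 2 - j' ≤ i' - 1 ∧ j' + 1 ≤ n - i'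
    · by_cases hC2 : m - 2 - j' + 1 ≤ m - 1 ∧ j' = m - 1 - (m - 2 - j' + 1)
          ∧ m - 2 - j' + 1 ≤ i' ∧ j' ≤ n - i' - 1
      · rw [if_pos hC1, if_pos hC2,
            show i' - 1 - (m - 2 - j') = i' - (m - 2 - j' + 1) from by omega,
            show n - i' - (j' + 1) = n - i' - 1 - j' from by omega]
        obtain ⟨hA, hBc, hCc, hD⟩ := hC1
        have hnat : (m - 1).choose (m - 2 - j' + 1) * (m - 2 - j' + 1)
            = (m - 1).choose (m - 2 - j') * (j' + 1) := by
          rw [Nat.choose_succ_right_eq]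
          congr 1
          omega
        have hk2 : ((m - 1).choose (m - 2 - j' + 1) : k) * ((m - 2 - j' + 1 : ℕ) : k)
            = ((m - 1).choose (m - 2 - j') : k) * ((j' + 1 : ℕ) : k) := by
          rw [← Nat.cast_mul, ← Nat.cast_mul, hnat]
        have hsgn : ((-1 : k) ^ (j' + 1)) = -((-1 : k) ^ j') := by
          rw [pow_succ]; ring
        rw [hsgn]
        linear_combination
          ((-1 : k) ^ j' * coeff (ex (i' - (m - 2 - j' + 1)) (n - i' - 1 - j')) f.1) * hk2
      · rw [if_pos hC1, if_neg hC2,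
            hcoeff (i' - 1 - (m - 2 - j')) (n - i' - (j' + 1)) (by omega)]
        ring
    · by_cases hC2 : m - 2 - j' + 1 ≤ m - 1 ∧ j' = m - 1 - (m - 2 - j' + 1)
          ∧ m - 2 - j' + 1 ≤ i' ∧ j' ≤ n - i' - 1
      · rw [if_neg hC1, if_pos hC2,
            hcoeff (i' - (m - 2 - j' + 1)) (n - i' - 1 - j') (by omega)]
        ring
      · rw [if_neg hC1, if_neg hC2]; ring
  -- Part C: kernel is contained in the range
  have hker_le : ∀ t : TensorProduct k (Vr k n) (Vr k m),
      lam t = 0 → t ∈ LinearMap.range eta := by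
    intro t ht
    obtain ⟨c, cdef⟩ : ∃ c : ℕ → ℕ → k, ∀ i j : ℕ,
        c i j = Phi (Vr k n) (Vr k m) (ex i (n - 1 - i)) (ex j (m - 1 - j)) t :=
      ⟨_, fun _ _ => rfl⟩
    have hOOR : ∀ i j : ℕ, (n ≤ i ∨ m ≤ j) → c i j = 0 := by
      intro i j hij
      rw [cdef i j]
      rcases hij with h | h
      · exact Phi_vanish _ _ _ (Or.inl (by simp only [ex_apply_zero, ex_apply_one]; omega))
      · exact Phi_vanish _ _ _ (Or.inr (by simp only [ex_apply_zero, ex_apply_one]; omega))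
    have hE : ∀ i' j' : ℕ, 1 ≤ i' → i' ≤ n → j' ≤ m - 2 →
        ((j' + 1 : ℕ) : k) * c (i' - 1) (j' + 1) + ((m - 1 - j' : ℕ) : k) * c i' j' = 0 := by
      intro i' j' h1 h2 h3
      have h := PC2 n m hm2 hmn lam hlam t i' j' h2
      rw [ht, map_zero] at h
      rw [show n - i' - 1 = n - 1 - i' from by omega,
          show n - i' = n - 1 - (i' - 1) from by omega,
          show m - 2 - j' + 1 = m - 1 - j' from by omega,
          show m - 2 - j' = m - 1 - (j' + 1) from by omega,
          ← cdef (i' - 1) (j' + 1), ← cdef i' j'] at h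
      exact h.symm
    have hE0 : ∀ j' : ℕ, j' ≤ m - 2 → c 0 j' = 0 := by
      intro j' h3
      have h := PC2 n m hm2 hmn lam hlam t 0 j' (by omega)
      rw [ht, map_zero] at h
      have hv : Phi (Vr k n) (Vr k m) (ex (0 - 1) (n - 0)) (ex (j' + 1) (m - 2 - j')) t = 0 :=
        Phi_vanish _ _ _ (Or.inl (by simp only [ex_apply_zero, ex_apply_one]; omega))
      rw [hv, mul_zero, zero_add] at h
      rw [show n - 0 - 1 = n - 1 - 0 from by omega,
          show m - 2 - j' + 1 = m - 1 - j' from by omega,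
          ← cdef 0 j'] at h
      rcases mul_eq_zero.mp h.symm with h' | h'
      · exact absurd h' (cast_ne (m - 1 - j') (by omega) (by omega))
      · exact h'
    have hT : ∀ w i j : ℕ, n - i ≤ w → n ≤ i + j → c i j = 0 := by
      intro w
      induction w with
      | zero => intro i j hw hn'; exact hOOR i j (Or.inl (by omega))
      | succ w ih =>
        intro i j hw hn'
        by_cases hi : n ≤ i
        · exact hOOR i j (Or.inl hi)
        by_cases hjm : m ≤ j
        · exact hOOR i j (Or.inr hjm)
        have h := hE (i + 1) (j - 1) (by omega) (by omega) (by omega)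
        rw [show i + 1 - 1 = i from by omega, show j - 1 + 1 = j from by omega,
            ih (i + 1) (j - 1) (by omega) (by omega), mul_zero, add_zero] at h
        rcases mul_eq_zero.mp h with h' | h'
        · exact absurd h' (cast_ne j (by omega) (by omega))
        · exact h'
    have hB : ∀ i j : ℕ, i + j + 1 ≤ m - 1 → c i j = 0 := by
      intro i
      induction i with
      | zero => intro j hj; exact hE0 j (by omega)
      | succ i ih =>
        intro j hj
        have h := hE (i + 1) j (by omega) (by omega) (by omega)
        rw [show i + 1 - 1 = i from by omega, ih (j + 1) (by omega), mul_zero, zero_add] at h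
        rcases mul_eq_zero.mp h with h' | h'
        · exact absurd h' (cast_ne (m - 1 - j) (by omega) (by omega))
        · exact h'
    have hCL : ∀ v, v ≤ m - 1 → ∀ i,
        c i (m - 1 - v) = if v ≤ i ∧ i + (m - 1 - v) ≤ n - 1 then
          ((-1 : k) ^ ((m - 1 - v) + (m - 1)) * ((m - 1).choose (m - 1 - v) : k))
            * c (i - v) (m - 1) else 0 := by
      intro v
      induction v with
      | zero =>
        intro _ i
        simp only [Nat.sub_zero]
        by_cases hcond : 0 ≤ i ∧ i + (m - 1) ≤ n - 1
        · rw [if_pos hcond, Nat.choose_self, Nat.cast_one, mul_one]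
          have hone : ((-1 : k) ^ ((m - 1) + (m - 1))) = 1 := by
            rw [← two_mul, pow_mul, neg_one_sq, one_pow]
          rw [hone, one_mul]
        · rw [if_neg hcond]
          exact hT (n - i) i (m - 1) (le_refl _) (by omega)
      | succ v ih =>
        intro hv i
        cases i with
        | zero =>
          rw [hE0 (m - 1 - (v + 1)) (by omega), if_neg (by omega)]
        | succ i =>
          by_cases hbig : n ≤ i + 1
          · rw [hOOR _ _ (Or.inl hbig), if_neg (by omega)]
          · have h := hE (i + 1) (m - 1 - (v + 1)) (by omega) (by omega) (by omega)
            rw [show m - 1 - (v + 1) + 1 = m - 1 - v from by omega,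
                show m - 1 - (m - 1 - (v + 1)) = v + 1 from by omega,
                show i + 1 - 1 = i from by omega,
                ih (by omega) i] at h
            by_cases hcond : v ≤ i ∧ i + (m - 1 - v) ≤ n - 1
            · rw [if_pos hcond] at h
              rw [if_pos (show v + 1 ≤ i + 1 ∧ (i + 1) + (m - 1 - (v + 1)) ≤ n - 1 from by omega),
                  show i + 1 - (v + 1) = i - v from by omega]
              have hnat : (m - 1).choose (m - 1 - v) * (m - 1 - v)
                  = (m - 1).choose (m - 1 - (v + 1)) * (v + 1) := by
                have hh := Nat.choose_succ_right_eq (m - 1) (m - 1 - (v + 1))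
                rw [show m - 1 - (v + 1) + 1 = m - 1 - v from by omega,
                    show m - 1 - (m - 1 - (v + 1)) = v + 1 from by omega] at hh
                exact hh
              have hk2 : ((m - 1).choose (m - 1 - v) : k) * ((m - 1 - v : ℕ) : k)
                  = ((m - 1).choose (m - 1 - (v + 1)) : k) * ((v + 1 : ℕ) : k) := by
                rw [← Nat.cast_mul, ← Nat.cast_mul, hnat]
              have hsgn : ((-1 : k) ^ ((m - 1 - v) + (m - 1)))
                  = -((-1 : k) ^ ((m - 1 - (v + 1)) + (m - 1))) := by
                rw [show (m - 1 - v) + (m - 1) = ((m - 1 - (v + 1)) + (m - 1)) + 1 from by omega,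
                    pow_succ]
                ring
              rw [hsgn] at h
              have hnzv : ((v + 1 : ℕ) : k) ≠ 0 := cast_ne (v + 1) (by omega) (by omega)
              apply mul_left_cancel₀ hnzv
              linear_combination h + ((-1 : k) ^ ((m - 1 - (v + 1)) + (m - 1))
                * c (i - v) (m - 1)) * hk2
            · rw [if_neg hcond, mul_zero, zero_add] at h
              rw [if_neg (by omega)]
              rcases mul_eq_zero.mp h with h' | h'
              · exact absurd h' (cast_ne (v + 1) (by omega) (by omega))
              · exact h'
    -- construct the preimage
    obtain ⟨f0, hf0def⟩ : ∃ f0 : MvPolynomial (Fin 2) k,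
        f0 = ∑ s ∈ Finset.range (n - m + 1),
          ((-1 : k) ^ (m - 1) * c s (m - 1)) • ((X 0 : MvPolynomial (Fin 2) k) ^ s
            * X 1 ^ (n - m - s)) := ⟨_, rfl⟩
    have hf0mem : f0 ∈ Vr k (n - m + 1) := by
      rw [hf0def]
      apply Submodule.sum_mem
      intro s hs
      apply Submodule.smul_mem
      exact monomial_mem_Vr k s (n - m - s) (by have := Finset.mem_range.mp hs; omega)
    have hf0coeff : ∀ a b : ℕ, coeff (ex a b) f0
        = if a ≤ n - m ∧ b = n - m - a then (-1 : k) ^ (m - 1) * c a (m - 1) else 0 := by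
      intro a b
      rw [hf0def, MvPolynomial.coeff_sum]
      simp only [coeff_smul, coeff_mon, smul_eq_mul]
      by_cases hab : a ≤ n - m ∧ b = n - m - a
      · rw [Finset.sum_eq_single a ?g1 ?g2, if_pos (by rw [hab.2]), mul_one, if_pos hab]
        case g1 =>
          intro s hs hne
          rw [if_neg (fun hcon => hne (ex_inj hcon).1), mul_zero]
        case g2 =>
          intro habs
          exact absurd (Finset.mem_range.mpr (by omega)) habs
      · rw [Finset.sum_eq_zero, if_neg hab]
        intro s hs
        have hsm := Finset.mem_range.mp hs
        rw [if_neg ?hcon, mul_zero]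
        case hcon =>
          intro hcon
          obtain ⟨h1, h2⟩ := ex_inj hcon
          exact hab ⟨by omega, by omega⟩
    refine ⟨⟨f0, hf0mem⟩, ?_⟩
    have hvalmk : ((⟨f0, hf0mem⟩ : Vr k (n - m + 1)) : MvPolynomial (Fin 2) k) = f0 := rfl
    have key : ∀ i j : ℕ,
        Phi (Vr k n) (Vr k m) (ex i (n - 1 - i)) (ex j (m - 1 - j))
          (t - eta ⟨f0, hf0mem⟩) = 0 := by
      intro i j
      rw [map_sub, PC1 n m hm2 hmn eta heta ⟨f0, hf0mem⟩ i (n - 1 - i) j (m - 1 - j),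
        ← cdef i j]
      by_cases hj : j ≤ m - 1
      · have hv := hCL (m - 1 - j) (by omega) i
        rw [show m - 1 - (m - 1 - j) = j from by omega] at hv
        rw [hv]
        by_cases hcond : m - 1 - j ≤ i ∧ i + j ≤ n - 1
        · rw [if_pos hcond, if_pos ⟨by omega, by omega, hcond.1, by omega⟩,
            hvalmk, hf0coeff, if_pos ⟨by omega, by omega⟩, Nat.choose_symm hj, pow_add]
          ring
        · rw [if_neg hcond]
          by_cases hC : m - 1 - j ≤ m - 1 ∧ j = m - 1 - (m - 1 - j) ∧ m - 1 - j ≤ i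
              ∧ j ≤ n - 1 - i
          · rw [if_pos hC, hvalmk, hf0coeff, if_neg (by omega)]
            simp
          · rw [if_neg hC]
            simp
      · rw [hOOR i j (Or.inr (by omega)), if_neg (by omega)]
        simp
    have hzero := tensor_ext (t - eta ⟨f0, hf0mem⟩) key
    replace hzero := sub_eq_zero.mp hzero
    exact hzero.symm
  -- assemble
  have hre : LinearMap.range eta = LinearMap.ker lam := by
    apply le_antisymm
    · rintro x ⟨f, rfl⟩
      exact LinearMap.mem_ker.mpr (hlameta f)
    · intro t ht
      exact hker_le t (LinearMap.mem_ker.mp ht)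
  exact ⟨hinj, hre,
    ⟨((LinearEquiv.ofInjective eta hinj).trans (LinearEquiv.ofEq _ _ hre)).symm⟩⟩
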